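/- Let A be a C*-algebra of real rank zero and let φ be a state on A that can be excised. Then φ can be excised by projections: there is a net (p_λ) of projections in A with ‖p_λ a p_λ − φ(a) p_λ‖ → 0 for all a ∈ A. -/

import Mathlib

open scoped ComplexOrder NNReal

open Filter

/-- Any function is continuous on a finite set. -/
lemma continuousOn_of_finite_aux {s : Set ℝ} (hs : s.Finite) (f : ℝ → ℝ) :
    ContinuousOn f s := by
  intro x hx
  have h1 : nhdsWithin x s = pure x := by
    have hdecomp : s = (s \ {x}) ∪ {x} := by
      ext y; by_cases hy : y = x <;> simp [hy, hx]
    have h2 : nhdsWithin x (s \ {x}) = ⊥ := by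
      rw [← not_neBot, ← mem_closure_iff_nhdsWithin_neBot,
        ((hs.diff (t := {x})).isClosed).closure_eq]
      simp
    rw [hdecomp, nhdsWithin_union, h2, nhdsWithin_singleton, sup_comm, sup_bot_eq]
  unfold ContinuousWithinAt
  rw [h1]
  exact tendsto_pure_nhds f x

section Aux

variable {A : Type} [CStarAlgebra A] [PartialOrder A] [StarOrderedRing A]

/-- Construction of a projection almost dominated by `h`, from real rank zero. -/
lemma exists_proj_near
    (hrr : ∀ a : A, IsSelfAdjoint a → ∀ ε : ℝ, 0 < ε →
      ∃ b : A, IsSelfAdjoint b ∧ (spectrum ℂ b).Finite ∧ ‖a - b‖ < ε)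
    (h : A) (hh0 : 0 ≤ h) (hh1 : ‖h‖ = 1) {δ : ℝ} (hδ0 : 0 < δ) (hδ1 : δ < 1/2) :
    ∃ p : A, IsSelfAdjoint p ∧ IsIdempotentElem p ∧ p ≠ 0 ∧ ‖p‖ ≤ 1 ∧
      ‖p - p * h * p‖ ≤ 3 * δ := by
  have hhne : h ≠ 0 := by
    intro h0; rw [h0, norm_zero] at hh1; linarith
  have hA : Nontrivial A := nontrivial_of_ne h 0 hhne
  have hhsa : IsSelfAdjoint h := .of_nonneg hh0
  obtain ⟨b, hbsa, hbfin, hbd⟩ := hrr h hhsa δ hδ0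
  have hfinR : (spectrum ℝ b).Finite := by
    rw [← spectrum.preimage_algebraMap ℂ]
    exact hbfin.preimage ((algebraMap ℝ ℂ).injective.injOn)
  have hcont : ∀ g : ℝ → ℝ, ContinuousOn g (spectrum ℝ b) :=
    fun g => continuousOn_of_finite_aux hfinR g
  set f : ℝ → ℝ := fun x => if 1 - 2*δ ≤ x then 1 else 0 with hfdef
  have hfval1 : ∀ x, 1 - 2*δ ≤ x → f x = 1 := by
    intro x hx; simp only [hfdef]; rw [if_pos hx]
  have hfval0 : ∀ x, ¬ (1 - 2*δ ≤ x) → f x = 0 := by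
    intro x hx; simp only [hfdef]; rw [if_neg hx]
  have hf01 : ∀ x, f x = 0 ∨ f x = 1 := by
    intro x
    by_cases hx : 1 - 2*δ ≤ x
    · exact Or.inr (hfval1 x hx)
    · exact Or.inl (hfval0 x hx)
  set p : A := cfc f b with hp
  have hpsa : IsSelfAdjoint p := cfc_predicate f b
  have hpidem : IsIdempotentElem p := by
    unfold IsIdempotentElem
    rw [hp, ← cfc_mul f f b (hcont f) (hcont f)]
    exact cfc_congr fun x _ => by rcases hf01 x with hx | hx <;> rw [hx] <;> ring
  have hpnorm : ‖p‖ ≤ 1 := by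
    refine norm_cfc_le zero_le_one fun x _ => ?_
    rcases hf01 x with hx | hx <;> rw [hx] <;> norm_num
  have hbnorm : ‖b‖ ≤ 1 + δ := by
    calc ‖b‖ = ‖h - (h - b)‖ := by rw [sub_sub_cancel]
    _ ≤ ‖h‖ + ‖h - b‖ := norm_sub_le _ _
    _ ≤ 1 + δ := by rw [hh1]; linarith
  have hex : ∃ x ∈ spectrum ℝ b, 1 - 2*δ ≤ x := by
    by_contra hc
    push_neg at hc
    have hble : b ≤ algebraMap ℝ A (1 - 2*δ) := by
      calc b = cfc (id : ℝ → ℝ) b := (cfc_id ℝ b hbsa).symm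
      _ ≤ cfc (fun _ : ℝ => (1 - 2*δ)) b := cfc_mono (fun x hx => (hc x hx).le)
      _ = algebraMap ℝ A (1 - 2*δ) := cfc_const _ _ hbsa
    have hhb : h - b ≤ algebraMap ℝ A ‖h - b‖ :=
      IsSelfAdjoint.le_algebraMap_norm_self (hhsa.sub hbsa)
    have hle : h ≤ algebraMap ℝ A (‖h - b‖ + (1 - 2*δ)) := by
      have := add_le_add hhb hble
      rwa [sub_add_cancel, ← map_add] at this
    have hnorm := (CStarAlgebra.norm_le_iff_le_algebraMap h
      (by have := norm_nonneg (h - b); linarith) hh0).mpr hle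
    rw [hh1] at hnorm
    linarith
  obtain ⟨x₀, hx₀, hx₀'⟩ := hex
  have hpne : p ≠ 0 := by
    intro h0
    have hmem : f x₀ ∈ spectrum ℝ p := by
      rw [hp, cfc_map_spectrum f b hbsa (hcont f)]
      exact ⟨x₀, hx₀, rfl⟩
    rw [h0, spectrum.zero_eq] at hmem
    rw [hfval1 x₀ hx₀'] at hmem
    simp at hmem
  have key1 : ‖p - p * b * p‖ ≤ 2*δ := by
    have e2 : cfc (fun x : ℝ => f x - f x * x * f x) b = p - p * b * p := by
      rw [cfc_sub f (fun x : ℝ => f x * x * f x) b (hcont f) (hcont _),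
        cfc_mul (fun x : ℝ => f x * x) f b (hcont _) (hcont f),
        cfc_mul f (fun x : ℝ => x) b (hcont f) (hcont _),
        cfc_id' ℝ b hbsa, hp]
    rw [← e2]
    refine norm_cfc_le (by linarith) fun x hx => ?_
    have hxb : |x| ≤ ‖b‖ := by
      simpa [Real.norm_eq_abs] using spectrum.norm_le_norm_of_mem hx
    rw [abs_le] at hxb
    by_cases hxm : 1 - 2*δ ≤ x
    · rw [hfval1 x hxm]
      simp only [one_mul, mul_one]
      rw [Real.norm_eq_abs, abs_le]
      constructor <;> nlinarith
    · rw [hfval0 x hxm]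
      simp
      linarith
  refine ⟨p, hpsa, hpidem, hpne, hpnorm, ?_⟩
  have decomp : p - p * h * p = (p - p * b * p) + p * (b - h) * p := by
    noncomm_ring
  calc ‖p - p * h * p‖ ≤ ‖p - p * b * p‖ + ‖p * (b - h) * p‖ := by
        rw [decomp]; exact norm_add_le _ _
  _ ≤ 2*δ + ‖p * (b - h) * p‖ := by linarith
  _ ≤ 2*δ + δ := by
      have h1 : ‖p * (b - h) * p‖ ≤ ‖p‖ * ‖b - h‖ * ‖p‖ := by
        calc ‖p * (b - h) * p‖ ≤ ‖p * (b - h)‖ * ‖p‖ := norm_mul_le _ _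
        _ ≤ ‖p‖ * ‖b - h‖ * ‖p‖ :=
            mul_le_mul_of_nonneg_right (norm_mul_le _ _) (norm_nonneg _)
      have h2 : ‖b - h‖ < δ := by rwa [norm_sub_rev] at hbd
      have h3 : ‖p‖ * ‖b - h‖ * ‖p‖ ≤ 1 * δ * 1 :=
        mul_le_mul (mul_le_mul hpnorm h2.le (norm_nonneg _) zero_le_one)
          hpnorm (norm_nonneg _) (by positivity)
      have h4 : (1:ℝ) * δ * 1 = δ := by ring
      linarith
  _ = 3*δ := by ring

/-- The key estimate. -/
lemma estimate_aux (φ : A →L[ℂ] ℂ) (h : A) (hh0 : 0 ≤ h) (hh1 : ‖h‖ = 1)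
    (p : A) (hpsa : IsSelfAdjoint p) (hpidem : IsIdempotentElem p) (hpnorm : ‖p‖ ≤ 1)
    {η : ℝ} (hη0 : 0 ≤ η) (hpη : ‖p - p * h * p‖ ≤ η) (a : A) :
    ‖p * a * p - φ a • p‖ ≤
      ‖CFC.sqrt h * a * CFC.sqrt h - φ a • h‖ + 2 * Real.sqrt η * ‖a‖ + ‖φ‖ * ‖a‖ * η := by
  have hhne : h ≠ 0 := fun h0 => by rw [h0, norm_zero] at hh1; linarith
  have hA : Nontrivial A := nontrivial_of_ne h 0 hhne
  have hhsa : IsSelfAdjoint h := .of_nonneg hh0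
  set s : A := CFC.sqrt h with hsdef
  have hs0 : 0 ≤ s := CFC.sqrt_nonneg h
  have hssa : IsSelfAdjoint s := .of_nonneg hs0
  have hss : s * s = h := by rw [← pow_two]; exact CFC.sq_sqrt h hh0
  have hsnorm : ‖s‖ ≤ 1 := by
    have h1 : ‖s‖ * ‖s‖ = ‖h‖ := by
      rw [← hss]
      conv_lhs => rw [← CStarRing.norm_star_mul_self (x := s), hssa.star_eq]
    nlinarith [norm_nonneg s]
  have hh_le_one : h ≤ 1 := by
    have h1 := IsSelfAdjoint.le_algebraMap_norm_self hhsa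
    rw [hh1, map_one] at h1
    exact h1
  have hhs : h ≤ s := by
    have hsqrt_eq : s = cfc Real.sqrt h := by
      rw [hsdef, CFC.sqrt_eq_cfc, cfc_nnreal_eq_real NNReal.sqrt h hh0]
      exact cfc_congr fun x _ => by rw [Real.sqrt]
    calc h = cfc (fun x : ℝ => x) h := (cfc_id' ℝ h hhsa).symm
    _ ≤ cfc Real.sqrt h := by
        refine cfc_mono fun x hx => ?_
        have hx0 : 0 ≤ x := spectrum_nonneg_of_nonneg hh0 hx
        have hx1 : x ≤ 1 := by
          have := spectrum.norm_le_norm_of_mem hx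
          rw [hh1, Real.norm_eq_abs] at this
          exact (abs_le.mp this).2
        rw [Real.le_sqrt hx0 hx0]
        nlinarith
    _ = s := hsqrt_eq.symm
  have hsq : (1 - s) * (1 - s) ≤ 1 - h := by
    have hexp : (1 - s) * (1 - s) = 1 - s - s + s * s := by noncomm_ring
    rw [hexp, hss, ← sub_nonneg]
    have he : (1 - h) - (1 - s - s + h) = (s - h) + (s - h) := by abel
    rw [he]
    exact add_nonneg (sub_nonneg.mpr hhs) (sub_nonneg.mpr hhs)
  set q : A := (1 - s) * p with hqdef
  have hstarq : star q = p * (1 - s) := by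
    rw [hqdef, star_mul, hpsa.star_eq, star_sub, star_one, hssa.star_eq]
  have h3 : p * (1 - h) * p = p - p * h * p := by
    rw [mul_sub, mul_one, sub_mul, hpidem.eq]
  have hq : ‖q‖ ≤ Real.sqrt η := by
    have h1 : star q * q = p * ((1 - s) * (1 - s)) * p := by
      rw [hstarq, hqdef]; noncomm_ring
    have h2 : star q * q ≤ p - p * h * p := by
      rw [h1, ← h3]
      have := star_left_conjugate_le_conjugate hsq p
      rwa [hpsa.star_eq] at this
    have h4 : ‖q‖ * ‖q‖ ≤ η := by
      rw [← CStarRing.norm_star_mul_self]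
      exact le_trans (CStarAlgebra.norm_le_norm_of_nonneg_of_le (star_mul_self_nonneg q) h2) hpη
    have h5 := Real.sqrt_le_sqrt h4
    rwa [Real.sqrt_mul_self (norm_nonneg q)] at h5
  have hq' : ‖p - p * s‖ ≤ Real.sqrt η := by
    have he : p - p * s = star q := by rw [hstarq, mul_sub, mul_one]
    rw [he, norm_star]
    exact hq
  have hq'' : p - s * p = q := by rw [hqdef, sub_mul, one_mul]
  have decomp : p * a * p - φ a • p =
      (p - p * s) * (a * p) + (p * s) * a * (p - s * p)
        + p * (s * a * s - φ a • h) * p + φ a • (p * h * p - p) := by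
    simp only [mul_sub, sub_mul, mul_smul_comm, smul_mul_assoc, smul_sub, mul_assoc]
    abel
  have n1 : ‖(p - p * s) * (a * p)‖ ≤ Real.sqrt η * ‖a‖ := by
    calc ‖(p - p * s) * (a * p)‖ ≤ ‖p - p * s‖ * ‖a * p‖ := norm_mul_le _ _
    _ ≤ Real.sqrt η * ‖a‖ := by
        have hap : ‖a * p‖ ≤ ‖a‖ := by
          calc ‖a * p‖ ≤ ‖a‖ * ‖p‖ := norm_mul_le _ _
          _ ≤ ‖a‖ * 1 := mul_le_mul_of_nonneg_left hpnorm (norm_nonneg a)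
          _ = ‖a‖ := mul_one _
        exact mul_le_mul hq' hap (norm_nonneg _) (Real.sqrt_nonneg _)
  have n2 : ‖(p * s) * a * (p - s * p)‖ ≤ ‖a‖ * Real.sqrt η := by
    rw [hq'']
    calc ‖(p * s) * a * q‖ ≤ ‖(p * s) * a‖ * ‖q‖ := norm_mul_le _ _
    _ ≤ ‖a‖ * Real.sqrt η := by
        have hps : ‖(p * s) * a‖ ≤ ‖a‖ := by
          calc ‖(p * s) * a‖ ≤ ‖p * s‖ * ‖a‖ := norm_mul_le _ _
          _ ≤ 1 * ‖a‖ := by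
              refine mul_le_mul_of_nonneg_right ?_ (norm_nonneg a)
              calc ‖p * s‖ ≤ ‖p‖ * ‖s‖ := norm_mul_le _ _
              _ ≤ 1 := by simpa using mul_le_mul hpnorm hsnorm (norm_nonneg s) zero_le_one
          _ = ‖a‖ := one_mul _
        exact mul_le_mul hps hq (norm_nonneg _) (norm_nonneg _)
  have n3 : ‖p * (s * a * s - φ a • h) * p‖ ≤ ‖s * a * s - φ a • h‖ := by
    calc ‖p * (s * a * s - φ a • h) * p‖ ≤ ‖p * (s * a * s - φ a • h)‖ * ‖p‖ :=
          norm_mul_le _ _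
    _ ≤ (‖p‖ * ‖s * a * s - φ a • h‖) * ‖p‖ :=
          mul_le_mul_of_nonneg_right (norm_mul_le _ _) (norm_nonneg _)
    _ ≤ (1 * ‖s * a * s - φ a • h‖) * 1 :=
          mul_le_mul (mul_le_mul hpnorm le_rfl (norm_nonneg _) zero_le_one)
            hpnorm (norm_nonneg _) (by positivity)
    _ = ‖s * a * s - φ a • h‖ := by ring
  have n4 : ‖φ a • (p * h * p - p)‖ ≤ ‖φ‖ * ‖a‖ * η := by
    rw [norm_smul]
    have h1 : ‖φ a‖ ≤ ‖φ‖ * ‖a‖ := φ.le_opNorm a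
    have h2 : ‖p * h * p - p‖ ≤ η := by rwa [norm_sub_rev] at hpη
    have := mul_le_mul h1 h2 (norm_nonneg _) (by positivity)
    linarith
  calc ‖p * a * p - φ a • p‖
      ≤ ‖(p - p * s) * (a * p) + (p * s) * a * (p - s * p)
          + p * (s * a * s - φ a • h) * p‖ + ‖φ a • (p * h * p - p)‖ := by
        rw [decomp]; exact norm_add_le _ _
  _ ≤ ‖(p - p * s) * (a * p) + (p * s) * a * (p - s * p)‖
        + ‖p * (s * a * s - φ a • h) * p‖ + ‖φ a • (p * h * p - p)‖ := by
        have := norm_add_le ((p - p * s) * (a * p) + (p * s) * a * (p - s * p))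
          (p * (s * a * s - φ a • h) * p)
        linarith
  _ ≤ ‖(p - p * s) * (a * p)‖ + ‖(p * s) * a * (p - s * p)‖
        + ‖p * (s * a * s - φ a • h) * p‖ + ‖φ a • (p * h * p - p)‖ := by
        have := norm_add_le ((p - p * s) * (a * p)) ((p * s) * a * (p - s * p))
        linarith
  _ ≤ ‖s * a * s - φ a • h‖ + 2 * Real.sqrt η * ‖a‖ + ‖φ‖ * ‖a‖ * η := by
        linarith

end Aux

/-- In a real rank zero C*-algebra, a state which can be excised can be excised
by projections. -/
theorem excision_by_projections_of_real_rank_zero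
    (A : Type) [CStarAlgebra A] [PartialOrder A] [StarOrderedRing A]
    (hrr : ∀ a : A, IsSelfAdjoint a → ∀ ε : ℝ, 0 < ε →
      ∃ b : A, IsSelfAdjoint b ∧ (spectrum ℂ b).Finite ∧ ‖a - b‖ < ε)
    (φ : A →L[ℂ] ℂ) (hpos : ∀ a : A, 0 ≤ φ (star a * a)) (hone : φ 1 = 1)
    (hexc : ∃ (ι : Type) (l : Filter ι) (h : ι → A), l.NeBot ∧
      (∀ i : ι, 0 ≤ h i ∧ ‖h i‖ = 1) ∧
      ∀ a : A,
        Filter.Tendsto (fun i => ‖CFC.sqrt (h i) * a * CFC.sqrt (h i) - φ a • h i‖)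
          l (nhds 0)) :
    ∃ (ι : Type) (l : Filter ι) (p : ι → A), l.NeBot ∧
      (∀ i : ι, IsSelfAdjoint (p i) ∧ IsIdempotentElem (p i) ∧ p i ≠ 0) ∧
      ∀ a : A,
        Filter.Tendsto (fun i => ‖p i * a * p i - φ a • p i‖) l (nhds 0) := by
  obtain ⟨ι, l, h0, hl, hh, htend⟩ := hexc
  set dd : ℕ → ℝ := fun n => ((n : ℝ) + 4)⁻¹ with hdd
  have hdd0 : ∀ n, 0 < dd n := fun n => by positivity
  have hdd1 : ∀ n, dd n < 1/2 := by
    intro n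
    have hn : (0:ℝ) ≤ (n : ℝ) := Nat.cast_nonneg n
    rw [hdd]
    rw [inv_lt_comm₀ (by linarith) (by norm_num)]
    norm_num
    linarith
  have hddlim : Filter.Tendsto dd atTop (nhds 0) := by
    apply tendsto_inv_atTop_zero.comp
    exact tendsto_atTop_add_const_right atTop 4 tendsto_natCast_atTop_atTop
  have hex : ∀ x : ι × ℕ, ∃ p : A, IsSelfAdjoint p ∧ IsIdempotentElem p ∧ p ≠ 0 ∧
      ‖p‖ ≤ 1 ∧ ‖p - p * (h0 x.1) * p‖ ≤ 3 * dd x.2 :=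
    fun x => exists_proj_near hrr (h0 x.1) (hh x.1).1 (hh x.1).2 (hdd0 x.2) (hdd1 x.2)
  refine ⟨ι × ℕ, l ×ˢ atTop, fun x => (hex x).choose, ?_, ?_, ?_⟩
  · exact Filter.prod_neBot.mpr ⟨hl, atTop_neBot⟩
  · exact fun x => ⟨(hex x).choose_spec.1, (hex x).choose_spec.2.1,
      (hex x).choose_spec.2.2.1⟩
  · intro a
    refine squeeze_zero (fun x => norm_nonneg _) (g := fun x : ι × ℕ =>
      ‖CFC.sqrt (h0 x.1) * a * CFC.sqrt (h0 x.1) - φ a • h0 x.1‖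
        + 2 * Real.sqrt (3 * dd x.2) * ‖a‖ + ‖φ‖ * ‖a‖ * (3 * dd x.2)) ?_ ?_
    · intro x
      exact estimate_aux φ (h0 x.1) (hh x.1).1 (hh x.1).2 _
        (hex x).choose_spec.1 (hex x).choose_spec.2.1 (hex x).choose_spec.2.2.2.1
        (by positivity) (hex x).choose_spec.2.2.2.2 a
    · have h3dd : Filter.Tendsto (fun n => 3 * dd n) atTop (nhds 0) := by
        simpa using hddlim.const_mul (3:ℝ)
      have hsq : Filter.Tendsto (fun n => Real.sqrt (3 * dd n)) atTop (nhds 0) := by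
        have hc := (Real.continuous_sqrt.continuousAt (x := 0)).tendsto.comp h3dd
        rw [Real.sqrt_zero] at hc
        exact hc
      have t1 : Filter.Tendsto (fun x : ι × ℕ =>
          ‖CFC.sqrt (h0 x.1) * a * CFC.sqrt (h0 x.1) - φ a • h0 x.1‖)
          (l ×ˢ atTop) (nhds 0) := (htend a).comp tendsto_fst
      have t2 : Filter.Tendsto (fun x : ι × ℕ => 2 * Real.sqrt (3 * dd x.2) * ‖a‖)
          (l ×ˢ atTop) (nhds 0) := by
        have : Filter.Tendsto (fun n => 2 * Real.sqrt (3 * dd n) * ‖a‖) atTop (nhds 0) := by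
          simpa using (hsq.const_mul 2).mul_const ‖a‖
        exact this.comp tendsto_snd
      have t3 : Filter.Tendsto (fun x : ι × ℕ => ‖φ‖ * ‖a‖ * (3 * dd x.2))
          (l ×ˢ atTop) (nhds 0) := by
        have : Filter.Tendsto (fun n => ‖φ‖ * ‖a‖ * (3 * dd n)) atTop (nhds 0) := by
          simpa using h3dd.const_mul (‖φ‖ * ‖a‖)
        exact this.comp tendsto_snd
      simpa using (t1.add t2).add t3
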